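/- The unitary U_n satisfies (⟨0|⊗⟨0|⊗⟨0|⊗I_N) U_n (|0⟩⊗|0⟩⊗|0⟩⊗e_0) = (1/4)(−e_0 + e_1). -/

import Mathlib

open Matrix
open scoped Kronecker

noncomputable section

instance instNeZeroPow2 (n : ℕ) : NeZero (2 ^ n) := ⟨pow_ne_zero n two_ne_zero⟩

/-- Cyclic left shift: `Sm • e_j = e_{j-1 mod N}`, i.e. `(Sm)_{i j} = [i = j - 1]`. -/
def Sm (N : ℕ) [NeZero N] : Matrix (Fin N) (Fin N) ℂ :=
  Matrix.of fun i j => if i = j - 1 then 1 else 0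

/-- Cyclic right shift: `Sp • e_j = e_{j+1 mod N}`. -/
def Sp (N : ℕ) [NeZero N] : Matrix (Fin N) (Fin N) ℂ :=
  Matrix.of fun i j => if i = j + 1 then 1 else 0

/-- The index `N - 1` of the last grid point. -/
def fLast (N : ℕ) [NeZero N] : Fin N := ⟨N - 1, Nat.sub_lt (Nat.pos_of_neZero N) Nat.one_pos⟩

def Hgate : Matrix (Fin 2) (Fin 2) ℂ := ((1 / Real.sqrt 2 : ℝ) : ℂ) • !![1, 1; 1, -1]
def Zgate : Matrix (Fin 2) (Fin 2) ℂ := !![1, 0; 0, -1]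
def Xgate : Matrix (Fin 2) (Fin 2) ℂ := !![0, 1; 1, 0]
def P0 : Matrix (Fin 2) (Fin 2) ℂ := !![1, 0; 0, 0]
def P1 : Matrix (Fin 2) (Fin 2) ℂ := !![0, 0; 0, 1]

/-- Controlled flip `F(Q) = X ⊗ Q + I₂ ⊗ (I − Q)` for a projector `Q`. -/
def Fctrl {α : Type*} [DecidableEq α] [Fintype α] (Q : Matrix α α ℂ) :
    Matrix (Fin 2 × α) (Fin 2 × α) ℂ :=
  Xgate ⊗ₖ Q + (1 : Matrix (Fin 2) (Fin 2) ℂ) ⊗ₖ ((1 : Matrix α α ℂ) - Q)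

/-- `C₋ = I₂ ⊗ (|0⟩⟨0| ⊗ I₂ ⊗ S⁻ + |1⟩⟨1| ⊗ I₂ ⊗ I_N)` on `del, ℓ₁, ℓ₀, j`. -/
def Cminus3 (N : ℕ) [NeZero N] :
    Matrix (Fin 2 × Fin 2 × Fin 2 × Fin N) (Fin 2 × Fin 2 × Fin 2 × Fin N) ℂ :=
  (1 : Matrix (Fin 2) (Fin 2) ℂ) ⊗ₖ
    (P0 ⊗ₖ ((1 : Matrix (Fin 2) (Fin 2) ℂ) ⊗ₖ Sm N) +
     P1 ⊗ₖ ((1 : Matrix (Fin 2) (Fin 2) ℂ) ⊗ₖ (1 : Matrix (Fin N) (Fin N) ℂ)))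

/-- `C₊ = I₂ ⊗ I₂ ⊗ (|1⟩⟨1| ⊗ S⁺ + |0⟩⟨0| ⊗ I_N)` on `del, ℓ₁, ℓ₀, j`. -/
def Cplus3 (N : ℕ) [NeZero N] :
    Matrix (Fin 2 × Fin 2 × Fin 2 × Fin N) (Fin 2 × Fin 2 × Fin 2 × Fin N) ℂ :=
  (1 : Matrix (Fin 2) (Fin 2) ℂ) ⊗ₖ ((1 : Matrix (Fin 2) (Fin 2) ℂ) ⊗ₖ
    (P1 ⊗ₖ Sp N + P0 ⊗ₖ (1 : Matrix (Fin N) (Fin N) ℂ)))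

/-- `B₀ = F(|0⟩⟨0| ⊗ |0⟩⟨0| ⊗ e₀e₀ᵀ)`. -/
def B00 (N : ℕ) [NeZero N] :
    Matrix (Fin 2 × Fin 2 × Fin 2 × Fin N) (Fin 2 × Fin 2 × Fin 2 × Fin N) ℂ :=
  Fctrl (P0 ⊗ₖ (P0 ⊗ₖ Matrix.single (0 : Fin N) (0 : Fin N) (1 : ℂ)))

/-- `B₂ = F(|0⟩⟨0| ⊗ |1⟩⟨1| ⊗ e₀e₀ᵀ)`. -/
def B01 (N : ℕ) [NeZero N] :
    Matrix (Fin 2 × Fin 2 × Fin 2 × Fin N) (Fin 2 × Fin 2 × Fin 2 × Fin N) ℂ :=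
  Fctrl (P0 ⊗ₖ (P1 ⊗ₖ Matrix.single (0 : Fin N) (0 : Fin N) (1 : ℂ)))

/-- `B_{N−1} = F(|1⟩⟨1| ⊗ |1⟩⟨1| ⊗ e_{N−1}e_{N−1}ᵀ)`. -/
def B11L (N : ℕ) [NeZero N] :
    Matrix (Fin 2 × Fin 2 × Fin 2 × Fin N) (Fin 2 × Fin 2 × Fin 2 × Fin N) ℂ :=
  Fctrl (P1 ⊗ₖ (P1 ⊗ₖ Matrix.single (fLast N) (fLast N) (1 : ℂ)))

/-- `B₄ = F(|0⟩⟨0| ⊗ |1⟩⟨1| ⊗ e_{N−1}e_{N−1}ᵀ)`. -/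
def B01L (N : ℕ) [NeZero N] :
    Matrix (Fin 2 × Fin 2 × Fin 2 × Fin N) (Fin 2 × Fin 2 × Fin 2 × Fin N) ℂ :=
  Fctrl (P0 ⊗ₖ (P1 ⊗ₖ Matrix.single (fLast N) (fLast N) (1 : ℂ)))

/-- `I₂ ⊗ A ⊗ A ⊗ I_N` for a single-qubit gate `A`. -/
def sandwich (N : ℕ) [NeZero N] (A : Matrix (Fin 2) (Fin 2) ℂ) :
    Matrix (Fin 2 × Fin 2 × Fin 2 × Fin N) (Fin 2 × Fin 2 × Fin 2 × Fin N) ℂ :=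
  (1 : Matrix (Fin 2) (Fin 2) ℂ) ⊗ₖ (A ⊗ₖ (A ⊗ₖ (1 : Matrix (Fin N) (Fin N) ℂ)))

/-- `U_d = (I₂⊗H⊗H⊗I) · C₊ · C₋ · B_{N−1} · B₀ · (I₂⊗Z⊗Z⊗I) · (I₂⊗H⊗H⊗I)`. -/
def Ud (N : ℕ) [NeZero N] :
    Matrix (Fin 2 × Fin 2 × Fin 2 × Fin N) (Fin 2 × Fin 2 × Fin 2 × Fin N) ℂ :=
  sandwich N Hgate * Cplus3 N * Cminus3 N * B11L N * B00 N * sandwich N Zgate * sandwich N Hgate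

/-- `U_n = (I₂⊗H⊗H⊗I) · C₊ · C₋ · B₄ · B₃ · B₂ · B₁ · (I₂⊗Z⊗Z⊗I) · (I₂⊗H⊗H⊗I)`. -/
def Un (N : ℕ) [NeZero N] :
    Matrix (Fin 2 × Fin 2 × Fin 2 × Fin N) (Fin 2 × Fin 2 × Fin 2 × Fin N) ℂ :=
  sandwich N Hgate * Cplus3 N * Cminus3 N * B01L N * B11L N * B01 N * B00 N *
    sandwich N Zgate * sandwich N Hgate

/-- The standard basis vector `e_i` of `ℂ^N`. -/
def eVec (N : ℕ) (i : Fin N) : Fin N → ℂ := Pi.single i 1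

/-! ### Auxiliary machinery for `un_left_boundary_action` -/

set_option linter.unusedSectionVars false

section Aux

variable (N : ℕ) [NeZero N]

/-- Scaled standard basis vector of the 4-register space. -/
def sgl (d a b : Fin 2) (t : Fin N) (k : ℂ) : (Fin 2 × Fin 2 × Fin 2 × Fin N) → ℂ :=
  Pi.single (d, a, b, t) k

lemma mulVec_sgl (M : Matrix (Fin 2 × Fin 2 × Fin 2 × Fin N) (Fin 2 × Fin 2 × Fin 2 × Fin N) ℂ)
    (d a b : Fin 2) (t : Fin N) (k : ℂ) :
    M *ᵥ sgl N d a b t k = fun p => M p (d, a, b, t) * k :=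
  Matrix.mulVec_single M _ k

lemma fin_flast_add_one : fLast N + 1 = 0 := by
  apply Fin.ext
  simp [fLast, Fin.add_def, Nat.sub_add_cancel (Nat.pos_of_neZero N)]

lemma fin_zero_sub_one : (0 : Fin N) - 1 = fLast N := by
  apply sub_eq_of_eq_add'
  rw [add_comm, fin_flast_add_one]

lemma fin_flast_ne_zero (hN : 2 ≤ N) : fLast N ≠ 0 := by
  apply Fin.ne_of_val_ne
  simp [fLast]
  omega

lemma fin_one_eq (hN : 2 ≤ N) : (1 : Fin N) = ⟨1, hN⟩ := by
  apply Fin.ext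
  simp [Fin.val_one', Nat.mod_eq_of_lt hN]

end Aux

section Steps

variable (N : ℕ) [NeZero N] (k : ℂ)

/-- step 1: first Hadamard sandwich -/
lemma stepH1 :
    sandwich N Hgate *ᵥ sgl N 0 0 0 0 1 =
      sgl N 0 0 0 0 (((1 / Real.sqrt 2 : ℝ) : ℂ) * ((1 / Real.sqrt 2 : ℝ) : ℂ))
      + sgl N 0 0 1 0 (((1 / Real.sqrt 2 : ℝ) : ℂ) * ((1 / Real.sqrt 2 : ℝ) : ℂ))
      + sgl N 0 1 0 0 (((1 / Real.sqrt 2 : ℝ) : ℂ) * ((1 / Real.sqrt 2 : ℝ) : ℂ))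
      + sgl N 0 1 1 0 (((1 / Real.sqrt 2 : ℝ) : ℂ) * ((1 / Real.sqrt 2 : ℝ) : ℂ)) := by
  rw [mulVec_sgl]
  funext p
  obtain ⟨d, a, b, j⟩ := p
  fin_cases d <;> fin_cases a <;> fin_cases b <;>
    simp [sandwich, Hgate, sgl, Matrix.one_apply, Pi.single_apply, Prod.ext_iff,
      Matrix.kroneckerMap_apply, Matrix.smul_apply, mul_comm]

/-- step 2: Z sandwich -/
lemma stepZ :
    sandwich N Zgate *ᵥ
      (sgl N 0 0 0 0 k + sgl N 0 0 1 0 k + sgl N 0 1 0 0 k + sgl N 0 1 1 0 k) =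
      sgl N 0 0 0 0 k + sgl N 0 0 1 0 (-k) + sgl N 0 1 0 0 (-k) + sgl N 0 1 1 0 k := by
  simp only [Matrix.mulVec_add, mulVec_sgl]
  funext p
  obtain ⟨d, a, b, j⟩ := p
  fin_cases d <;> fin_cases a <;> fin_cases b <;>
    simp [sandwich, Zgate, sgl, Matrix.one_apply, Pi.single_apply, Prod.ext_iff,
      Matrix.kroneckerMap_apply, mul_comm]

/-- step 3: B00 -/
lemma stepB00 :
    B00 N *ᵥ (sgl N 0 0 0 0 k + sgl N 0 0 1 0 (-k) + sgl N 0 1 0 0 (-k) + sgl N 0 1 1 0 k) =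
      sgl N 1 0 0 0 k + sgl N 0 0 1 0 (-k) + sgl N 0 1 0 0 (-k) + sgl N 0 1 1 0 k := by
  simp only [Matrix.mulVec_add, mulVec_sgl]
  funext p
  obtain ⟨d, a, b, j⟩ := p
  fin_cases d <;> fin_cases a <;> fin_cases b <;>
    simp [B00, Fctrl, Xgate, P0, P1, sgl, Matrix.one_apply, Pi.single_apply, Prod.ext_iff,
      Matrix.kroneckerMap_apply, Matrix.add_apply, Matrix.sub_apply, Matrix.single,
      Matrix.of_apply, mul_comm, eq_comm (a := (0 : Fin N)), apply_ite (f := Neg.neg), neg_zero]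
  all_goals (split_ifs <;> simp)

/-- step 4: B01 -/
lemma stepB01 :
    B01 N *ᵥ (sgl N 1 0 0 0 k + sgl N 0 0 1 0 (-k) + sgl N 0 1 0 0 (-k) + sgl N 0 1 1 0 k) =
      sgl N 1 0 0 0 k + sgl N 1 0 1 0 (-k) + sgl N 0 1 0 0 (-k) + sgl N 0 1 1 0 k := by
  simp only [Matrix.mulVec_add, mulVec_sgl]
  funext p
  obtain ⟨d, a, b, j⟩ := p
  fin_cases d <;> fin_cases a <;> fin_cases b <;>
    simp [B01, Fctrl, Xgate, P0, P1, sgl, Matrix.one_apply, Pi.single_apply, Prod.ext_iff,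
      Matrix.kroneckerMap_apply, Matrix.add_apply, Matrix.sub_apply, Matrix.single,
      Matrix.of_apply, mul_comm, eq_comm (a := (0 : Fin N))]
  all_goals (split_ifs <;> simp)

/-- step 5: B11L acts as identity here -/
lemma stepB11L (hN : 2 ≤ N) :
    B11L N *ᵥ (sgl N 1 0 0 0 k + sgl N 1 0 1 0 (-k) + sgl N 0 1 0 0 (-k) + sgl N 0 1 1 0 k) =
      sgl N 1 0 0 0 k + sgl N 1 0 1 0 (-k) + sgl N 0 1 0 0 (-k) + sgl N 0 1 1 0 k := by
  simp only [Matrix.mulVec_add, mulVec_sgl]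
  funext p
  obtain ⟨d, a, b, j⟩ := p
  have h0 := fin_flast_ne_zero N hN
  fin_cases d <;> fin_cases a <;> fin_cases b <;>
    simp [B11L, Fctrl, Xgate, P0, P1, sgl, Matrix.one_apply, Pi.single_apply, Prod.ext_iff,
      Matrix.kroneckerMap_apply, Matrix.add_apply, Matrix.sub_apply, Matrix.single,
      Matrix.of_apply, mul_comm, h0, (Ne.symm h0)]

/-- step 6: B01L acts as identity here -/
lemma stepB01L (hN : 2 ≤ N) :
    B01L N *ᵥ (sgl N 1 0 0 0 k + sgl N 1 0 1 0 (-k) + sgl N 0 1 0 0 (-k) + sgl N 0 1 1 0 k) =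
      sgl N 1 0 0 0 k + sgl N 1 0 1 0 (-k) + sgl N 0 1 0 0 (-k) + sgl N 0 1 1 0 k := by
  simp only [Matrix.mulVec_add, mulVec_sgl]
  funext p
  obtain ⟨d, a, b, j⟩ := p
  have h0 := fin_flast_ne_zero N hN
  fin_cases d <;> fin_cases a <;> fin_cases b <;>
    simp [B01L, Fctrl, Xgate, P0, P1, sgl, Matrix.one_apply, Pi.single_apply, Prod.ext_iff,
      Matrix.kroneckerMap_apply, Matrix.add_apply, Matrix.sub_apply, Matrix.single,
      Matrix.of_apply, mul_comm, h0, (Ne.symm h0)]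

/-- step 7: C₋ -/
lemma stepCm :
    Cminus3 N *ᵥ (sgl N 1 0 0 0 k + sgl N 1 0 1 0 (-k) + sgl N 0 1 0 0 (-k) + sgl N 0 1 1 0 k) =
      sgl N 1 0 0 (fLast N) k + sgl N 1 0 1 (fLast N) (-k)
        + sgl N 0 1 0 0 (-k) + sgl N 0 1 1 0 k := by
  simp only [Matrix.mulVec_add, mulVec_sgl]
  funext p
  obtain ⟨d, a, b, j⟩ := p
  have hzs := fin_zero_sub_one N
  fin_cases d <;> fin_cases a <;> fin_cases b <;>
    simp [Cminus3, Sm, P0, P1, sgl, Matrix.one_apply, Pi.single_apply, Prod.ext_iff,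
      Matrix.kroneckerMap_apply, Matrix.add_apply, Matrix.of_apply, mul_comm, hzs]
  all_goals (split_ifs <;> simp)

/-- step 8: C₊ -/
lemma stepCp (hN : 2 ≤ N) :
    Cplus3 N *ᵥ (sgl N 1 0 0 (fLast N) k + sgl N 1 0 1 (fLast N) (-k)
        + sgl N 0 1 0 0 (-k) + sgl N 0 1 1 0 k) =
      sgl N 1 0 0 (fLast N) k + sgl N 1 0 1 0 (-k)
        + sgl N 0 1 0 0 (-k) + sgl N 0 1 1 ⟨1, hN⟩ k := by
  simp only [Matrix.mulVec_add, mulVec_sgl]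
  funext p
  obtain ⟨d, a, b, j⟩ := p
  have h1 := fin_flast_add_one N
  have h2 := fin_one_eq N hN
  fin_cases d <;> fin_cases a <;> fin_cases b <;>
    simp [Cplus3, Sp, P0, P1, sgl, Matrix.one_apply, Pi.single_apply, Prod.ext_iff,
      Matrix.kroneckerMap_apply, Matrix.add_apply, Matrix.of_apply, mul_comm, h1, ← h2]
  all_goals (split_ifs <;> simp)

/-- step 9: final Hadamard sandwich, projected row -/
lemma stepH2 (hN : 2 ≤ N) (i : Fin N) :
    (sandwich N Hgate *ᵥ (sgl N 1 0 0 (fLast N) k + sgl N 1 0 1 0 (-k)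
        + sgl N 0 1 0 0 (-k) + sgl N 0 1 1 ⟨1, hN⟩ k)) (0, 0, 0, i) =
      ((1 / Real.sqrt 2 : ℝ) : ℂ) * ((1 / Real.sqrt 2 : ℝ) : ℂ) * k *
        (-(if i = 0 then 1 else 0) + (if i = (⟨1, hN⟩ : Fin N) then 1 else 0)) := by
  simp only [Matrix.mulVec_add, mulVec_sgl, Pi.add_apply]
  simp [sandwich, Hgate, Matrix.one_apply, Matrix.kroneckerMap_apply, Matrix.smul_apply]
  split_ifs <;> ring

lemma half_half : ((1 / Real.sqrt 2 : ℝ) : ℂ) * ((1 / Real.sqrt 2 : ℝ) : ℂ) = 1 / 2 := by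
  rw [← Complex.ofReal_mul, div_mul_div_comm, Real.mul_self_sqrt (by norm_num)]
  norm_num

/-- `(⟨0|⊗⟨0|⊗⟨0|⊗I) U_n (|0⟩⊗|0⟩⊗|0⟩⊗e_0) = (1/4)(−e_0 + e_1)`. -/
theorem un_left_boundary_action (n : ℕ) (hn : 1 ≤ n) :
    (fun i : Fin (2 ^ n) =>
        Un (2 ^ n) ((0 : Fin 2), (0 : Fin 2), (0 : Fin 2), i)
          ((0 : Fin 2), (0 : Fin 2), (0 : Fin 2), (0 : Fin (2 ^ n))))
      = (1 / 4 : ℂ) •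
          (-eVec (2 ^ n) 0
            + eVec (2 ^ n)
                ⟨1, (by have := Nat.one_lt_two_pow_iff.mpr (by omega : n ≠ 0); omega)⟩) := by
  have hN : 2 ≤ 2 ^ n := by
    calc 2 = 2 ^ 1 := (pow_one 2).symm
    _ ≤ 2 ^ n := Nat.pow_le_pow_right (by norm_num) hn
  set c : ℂ := ((1 / Real.sqrt 2 : ℝ) : ℂ) with hcdef
  have e2 : Un (2 ^ n) *ᵥ sgl (2 ^ n) 0 0 0 0 1 =
      sandwich (2 ^ n) Hgate *ᵥ
        (sgl (2 ^ n) 1 0 0 (fLast (2 ^ n)) (c * c) + sgl (2 ^ n) 1 0 1 0 (-(c * c))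
          + sgl (2 ^ n) 0 1 0 0 (-(c * c)) + sgl (2 ^ n) 0 1 1 ⟨1, hN⟩ (c * c)) := by
    simp only [Un, ← Matrix.mulVec_mulVec]
    rw [stepH1, stepZ, stepB00, stepB01, stepB11L _ _ hN, stepB01L _ _ hN, stepCm,
      stepCp _ _ hN]
  funext i
  have e1 : Un (2 ^ n) ((0 : Fin 2), (0 : Fin 2), (0 : Fin 2), i)
      ((0 : Fin 2), (0 : Fin 2), (0 : Fin 2), (0 : Fin (2 ^ n)))
      = (Un (2 ^ n) *ᵥ sgl (2 ^ n) 0 0 0 0 1) (0, 0, 0, i) := by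
    rw [mulVec_sgl]; ring
  rw [e1, e2, stepH2 _ _ hN i]
  have h4 : c * c * (c * c) = 1 / 4 := by rw [half_half]; norm_num
  simp only [Pi.smul_apply, Pi.add_apply, Pi.neg_apply, eVec, Pi.single_apply, smul_eq_mul]
  rw [mul_assoc c c (c * c), ← mul_assoc, h4]
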